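/- Let g : [0, M] → ℝ be concave with g(0) = 0, and let 0 = b0 < b1 < ... < br ≤ M. If the vector a = B⁻¹ · (g(b1), ..., g(br))ᵀ, where B is the matrix with B_{ij} = b_{min(i,j)}, then all entries of a are nonnegative if and only if g(b_i) ≥ ((b_{i+1}-b_i)/(b_{i+1}-b_{i-1}))·g(b_{i-1}) + ((b_i-b_{i-1})/(b_{i+1}-b_{i-1}))·g(b_{i+1}) for i = 1, ..., r-1, and g(b_r) ≥ g(b_{r-1}). In particular, both conditions hold when g is concave with g(0)=0 and is nondecreasing on [b_{r-1}, b_r]. -/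

import Mathlib

open Finset Matrix

private def Lmat (r : ℕ) : Matrix (Fin r) (Fin r) ℝ :=
  Matrix.of fun i j => if (j : ℕ) ≤ (i : ℕ) then 1 else 0

private lemma Lmat_det (r : ℕ) : (Lmat r).det = 1 := by
  have h : (Lmat r).BlockTriangular OrderDual.toDual := by
    intro i j hij
    have hij' : i < j := hij
    have h2 : ¬ ((j : ℕ) ≤ (i : ℕ)) := Nat.not_le.mpr hij'
    simp only [Lmat, Matrix.of_apply, if_neg h2]
  rw [Matrix.det_of_lowerTriangular _ h]
  simp [Lmat]

private lemma minMat_factor (r : ℕ) (b : ℕ → ℝ) (hb0 : b 0 = 0) :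
    (fun i j => b (min (i : ℕ) (j : ℕ) + 1) : Matrix (Fin r) (Fin r) ℝ)
      = Lmat r * Matrix.diagonal (fun k : Fin r => b ((k : ℕ) + 1) - b (k : ℕ)) * (Lmat r)ᵀ := by
  ext i j
  conv_rhs => rw [Matrix.mul_apply]
  simp only [Matrix.mul_diagonal, Matrix.transpose_apply, Lmat, Matrix.of_apply]
  rw [Fin.sum_univ_eq_sum_range
    (fun k => (if k ≤ (i : ℕ) then (1:ℝ) else 0) * (b (k + 1) - b k) *
      (if k ≤ (j : ℕ) then (1:ℝ) else 0)) r]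
  have hmr : min (i : ℕ) (j : ℕ) + 1 ≤ r := by
    have := i.isLt; have := j.isLt; omega
  rw [← Finset.sum_range_add_sum_Ico _ hmr]
  have h2 : ∑ k ∈ Finset.Ico (min (i : ℕ) (j : ℕ) + 1) r,
      ((if k ≤ (i : ℕ) then (1:ℝ) else 0) * (b (k + 1) - b k) *
        (if k ≤ (j : ℕ) then (1:ℝ) else 0)) = 0 := by
    apply Finset.sum_eq_zero
    intro k hk
    have hk' := Finset.mem_Ico.mp hk
    have : ¬ (k ≤ (i : ℕ)) ∨ ¬ (k ≤ (j : ℕ)) := by omega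
    rcases this with h | h
    · rw [if_neg h]; ring
    · rw [if_neg h]; ring
  have h1 : ∑ k ∈ Finset.range (min (i : ℕ) (j : ℕ) + 1),
      ((if k ≤ (i : ℕ) then (1:ℝ) else 0) * (b (k + 1) - b k) *
        (if k ≤ (j : ℕ) then (1:ℝ) else 0))
      = ∑ k ∈ Finset.range (min (i : ℕ) (j : ℕ) + 1), (b (k + 1) - b k) := by
    apply Finset.sum_congr rfl
    intro k hk
    have hk' := Finset.mem_range.mp hk
    rw [if_pos (by omega), if_pos (by omega)]
    ring
  rw [h1, h2, Finset.sum_range_sub (fun k => b k), hb0]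
  ring

theorem stmt10 (r : ℕ) (hr : 2 ≤ r) (M : ℝ) (g : ℝ → ℝ)
    (hconc : ConcaveOn ℝ (Set.Icc 0 M) g) (hg0 : g 0 = 0)
    (b : ℕ → ℝ) (hb0 : b 0 = 0) (hmono : ∀ i < r, b i < b (i + 1)) (hbM : b r ≤ M) :
    let B : Matrix (Fin r) (Fin r) ℝ := fun i j => b (min i.val j.val + 1)
    let a : Fin r → ℝ := Matrix.mulVec B⁻¹ (fun i => g (b (i.val + 1)))
    ((∀ i, 0 ≤ a i) ↔
      ((∀ i, 1 ≤ i → i < r →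
          (b (i + 1) - b i) / (b (i + 1) - b (i - 1)) * g (b (i - 1)) +
            (b i - b (i - 1)) / (b (i + 1) - b (i - 1)) * g (b (i + 1)) ≤ g (b i)) ∧
        g (b (r - 1)) ≤ g (b r))) ∧
    (MonotoneOn g (Set.Icc (b (r - 1)) (b r)) →
      ((∀ i, 1 ≤ i → i < r →
          (b (i + 1) - b i) / (b (i + 1) - b (i - 1)) * g (b (i - 1)) +
            (b i - b (i - 1)) / (b (i + 1) - b (i - 1)) * g (b (i + 1)) ≤ g (b i)) ∧
        g (b (r - 1)) ≤ g (b r))) := by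
  intro B a
  -- basic ordering facts
  have hstep : ∀ i < r, 0 < b (i + 1) - b i := fun i hi => sub_pos.mpr (hmono i hi)
  have hble : ∀ j ≤ r, ∀ i ≤ j, b i ≤ b j := by
    intro j hj
    induction j with
    | zero => intro i hi; interval_cases i; exact le_refl _
    | succ n ih =>
      intro i hi
      rcases Nat.eq_or_lt_of_le hi with h | h
      · rw [h]
      · exact le_trans (ih (by omega) i (by omega)) (hmono n (by omega)).le
  have hmem : ∀ i ≤ r, b i ∈ Set.Icc (0:ℝ) M := by
    intro i hi
    constructor
    · rw [← hb0]; exact hble i hi 0 (Nat.zero_le _)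
    · exact le_trans (hble r le_rfl i hi) hbM
  -- slopes
  set s : ℕ → ℝ := fun j => (g (b (j + 1)) - g (b j)) / (b (j + 1) - b j) with hs
  set s' : ℕ → ℝ := fun j => if j < r then s j else 0 with hs'
  set a' : Fin r → ℝ := fun j => s' (j : ℕ) - s' ((j : ℕ) + 1) with ha'
  have hs'lt : ∀ j, j < r → s' j = s j := by
    intro j hj; simp only [hs']; exact if_pos hj
  have hs'ge : ∀ j, r ≤ j → s' j = 0 := by
    intro j hj; simp only [hs']; exact if_neg (by omega)
  have hslope_mul : ∀ j < r, (b (j + 1) - b j) * s j = g (b (j + 1)) - g (b j) := by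
    intro j hj
    rw [hs]
    rw [mul_comm, div_mul_cancel₀ _ (hstep j hj).ne']
  have hanti : ∀ j, j + 2 ≤ r → s (j + 1) ≤ s j := by
    intro j hj
    have h1 := hconc.slope_anti_adjacent (hmem j (by omega)) (hmem (j + 2) hj)
      (hmono j (by omega)) (hmono (j + 1) (by omega))
    rw [hs]
    exact h1
  -- three-point inequality from concavity
  have hP : ∀ i, 1 ≤ i → i < r →
      (b (i + 1) - b i) / (b (i + 1) - b (i - 1)) * g (b (i - 1)) +
        (b i - b (i - 1)) / (b (i + 1) - b (i - 1)) * g (b (i + 1)) ≤ g (b i) := by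
    intro i h1 h2
    have h01 : b (i - 1) < b i := by
      have := hmono (i - 1) (by omega)
      rwa [Nat.sub_add_cancel h1] at this
    have h12 : b i < b (i + 1) := hmono i h2
    have hden : 0 < b (i + 1) - b (i - 1) := by linarith
    have hl : (0:ℝ) ≤ (b (i + 1) - b i) / (b (i + 1) - b (i - 1)) :=
      div_nonneg (by linarith) hden.le
    have hm : (0:ℝ) ≤ (b i - b (i - 1)) / (b (i + 1) - b (i - 1)) :=
      div_nonneg (by linarith) hden.le
    have hsum : (b (i + 1) - b i) / (b (i + 1) - b (i - 1)) +
        (b i - b (i - 1)) / (b (i + 1) - b (i - 1)) = 1 := by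
      field_simp
      ring
    have hcomb : (b (i + 1) - b i) / (b (i + 1) - b (i - 1)) * b (i - 1) +
        (b i - b (i - 1)) / (b (i + 1) - b (i - 1)) * b (i + 1) = b i := by
      field_simp
      ring
    have := hconc.2 (hmem (i - 1) (by omega)) (hmem (i + 1) h2) hl hm hsum
    simp only [smul_eq_mul] at this
    rwa [hcomb] at this
  -- matrix computations
  have hBfac : B = Lmat r * Matrix.diagonal (fun k : Fin r => b ((k : ℕ) + 1) - b (k : ℕ)) *
      (Lmat r)ᵀ := minMat_factor r b hb0
  have hdet : IsUnit B.det := by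
    rw [hBfac, Matrix.det_mul, Matrix.det_mul, Lmat_det, Matrix.det_transpose, Lmat_det,
      Matrix.det_diagonal]
    rw [isUnit_iff_ne_zero]
    simp only [one_mul, mul_one]
    rw [Finset.prod_ne_zero_iff]
    intro k _
    exact (hstep k k.isLt).ne'
  have hmv : B.mulVec a' = fun i : Fin r => g (b ((i : ℕ) + 1)) := by
    funext i
    have hstart : B.mulVec a' i
        = ∑ j : Fin r, b (min (i : ℕ) (j : ℕ) + 1) * (s' (j : ℕ) - s' ((j : ℕ) + 1)) := rfl
    rw [hstart]
    rw [Fin.sum_univ_eq_sum_range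
      (fun j => b (min (i : ℕ) j + 1) * (s' j - s' (j + 1))) r]
    have hi1 : (i : ℕ) + 1 ≤ r := i.isLt
    rw [← Finset.sum_range_add_sum_Ico _ hi1]
    have h1 : ∑ j ∈ Finset.range ((i : ℕ) + 1), b (min (i : ℕ) j + 1) * (s' j - s' (j + 1))
        = ∑ j ∈ Finset.range ((i : ℕ) + 1),
            ((g (b (j + 1)) - b (j + 1) * s' (j + 1)) - (g (b j) - b j * s' j)) := by
      apply Finset.sum_congr rfl
      intro j hj
      have hjr : j < r := by have := Finset.mem_range.mp hj; omega
      have hmin : min (i : ℕ) j = j := min_eq_right (by have := Finset.mem_range.mp hj; omega)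
      have hsj : s' j = s j := hs'lt j hjr
      have hmul := hslope_mul j hjr
      rw [hmin, hsj]
      nlinarith [hmul]
    have h2 : ∑ j ∈ Finset.Ico ((i : ℕ) + 1) r, b (min (i : ℕ) j + 1) * (s' j - s' (j + 1))
        = ∑ j ∈ Finset.Ico ((i : ℕ) + 1) r,
            (b ((i : ℕ) + 1) * s' j - b ((i : ℕ) + 1) * s' (j + 1)) := by
      apply Finset.sum_congr rfl
      intro j hj
      have hj' := Finset.mem_Ico.mp hj
      have hmin : min (i : ℕ) j = (i : ℕ) := min_eq_left (by omega)
      rw [hmin]; ring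
    rw [h1, h2, Finset.sum_range_sub (fun j => g (b j) - b j * s' j)]
    rw [Finset.sum_Ico_eq_sub _ hi1]
    rw [Finset.sum_range_sub' (fun j => b ((i : ℕ) + 1) * s' j),
        Finset.sum_range_sub' (fun j => b ((i : ℕ) + 1) * s' j)]
    have hsr : s' r = 0 := hs'ge r le_rfl
    rw [hb0, hg0, hsr]
    ring
  have haa : a = a' := by
    have h0 : a = B⁻¹.mulVec (B.mulVec a') := by
      rw [hmv]
    rw [Matrix.mulVec_mulVec, Matrix.nonsing_inv_mul _ hdet, Matrix.one_mulVec] at h0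
    exact h0
  have hr1 : r - 1 + 1 = r := by omega
  have hposr : 0 < b r - b (r - 1) := by
    have := hstep (r - 1) (by omega)
    rwa [hr1] at this
  have hsr1 : s (r - 1) = (g (b r) - g (b (r - 1))) / (b r - b (r - 1)) := by
    simp only [hs]
    rw [hr1]
  constructor
  · constructor
    · intro hpos
      refine ⟨hP, ?_⟩
      have h := hpos ⟨r - 1, by omega⟩
      rw [haa] at h
      have hval : a' ⟨r - 1, by omega⟩ = s (r - 1) := by
        simp only [ha']
        rw [hr1, hs'ge r le_rfl, hs'lt (r - 1) (by omega)]
        ring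
      rw [hval, hsr1] at h
      have := (le_div_iff₀ hposr).mp h
      linarith
    · rintro ⟨-, hlast⟩ i
      rw [haa]
      simp only [ha']
      rcases Nat.lt_or_ge ((i : ℕ) + 1) r with hlt | hge
      · rw [hs'lt _ i.isLt, hs'lt _ hlt]
        have := hanti (i : ℕ) (by omega)
        linarith
      · have hieq : (i : ℕ) = r - 1 := by have := i.isLt; omega
        rw [hs'lt _ i.isLt, hs'ge _ (by omega)]
        rw [hieq, hsr1]
        have : 0 ≤ (g (b r) - g (b (r - 1))) / (b r - b (r - 1)) :=
          div_nonneg (by linarith) hposr.le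
        linarith
  · intro hmon
    refine ⟨hP, ?_⟩
    have hle : b (r - 1) ≤ b r := hble r le_rfl (r - 1) (by omega)
    exact hmon ⟨le_refl _, hle⟩ ⟨hle, le_refl _⟩ hle
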